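/- arXiv:2601.03215 — 3 statements merged into one kernel-verified Lean document; each statement's English description precedes it below -/
import Mathlib

section
/- Let k : [0,∞) → [0,∞) be locally integrable, g be L-Lipschitz, and suppose the Volterra equation x(t) + ∫₀ᵗ k(t−s) g(x(s)) ds = f(t) admits a unique solution on [0,T] for every bounded f, with solution map that is C_T-Lipschitz in the sup norm. Let ε > 0 satisfy L ∫₀^ε k(s) ds ≤ 1/2. Then the equation admits a unique solution on [0,T+ε] for every bounded f on [0,T+ε], and the solution map on [0,T+ε] is Lipschitz with constant at most 2(1 + L C_T ∫₀^{T+ε} k(s) ds) + C_T. -/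
open MeasureTheory Set

/-- `x` is measurable and bounded on `[0, a]`. -/
def BddMeasOn (x : ℝ → ℝ) (a : ℝ) : Prop :=
  Measurable x ∧ ∃ M : ℝ, ∀ t ∈ Set.Icc (0:ℝ) a, |x t| ≤ M

/-- `x` is a bounded measurable solution on `[0, a]` of the Volterra equation
`x(t) + ∫₀ᵗ k(t-s) g(x(s)) ds = f(t)`. -/
def IsVolterraSol (k g f x : ℝ → ℝ) (a : ℝ) : Prop :=
  BddMeasOn x a ∧ ∀ t ∈ Set.Icc (0:ℝ) a,
    x t + ∫ s in (0:ℝ)..t, k (t - s) * g (x s) = f t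

/-- The solution map on `[0, a]` is `C`-Lipschitz in the sup norm. -/
def SolMapLip (k g : ℝ → ℝ) (a C : ℝ) : Prop :=
  ∀ f₁ f₂ x₁ x₂ : ℝ → ℝ,
    IsVolterraSol k g f₁ x₁ a → IsVolterraSol k g f₂ x₂ a →
    ∀ M : ℝ, (∀ t ∈ Set.Icc (0:ℝ) a, |f₁ t - f₂ t| ≤ M) →
    ∀ t ∈ Set.Icc (0:ℝ) a, |x₁ t - x₂ t| ≤ C * M

namespace VolterraExt
variable {k g : ℝ → ℝ} {L : ℝ}

variable {k g : ℝ → ℝ} {L : ℝ}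

lemma kInt (hk_loc : LocallyIntegrableOn k (Set.Ici 0)) {a b : ℝ} (ha : 0 ≤ a) (hab : a ≤ b) :
    IntervalIntegrable k volume a b := by
  rw [intervalIntegrable_iff_integrableOn_Ioc_of_le hab]
  exact (hk_loc.integrableOn_compact_subset
    (fun x hx => le_trans ha hx.1 : Icc a b ⊆ Ici 0) isCompact_Icc).mono_set Ioc_subset_Icc_self

lemma ktInt (hk_loc : LocallyIntegrableOn k (Set.Ici 0)) {a b t : ℝ}
    (ha : 0 ≤ a) (hab : a ≤ b) (hbt : b ≤ t) :
    IntervalIntegrable (fun s => k (t - s)) volume a b := by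
  have h := (kInt hk_loc (a := t - b) (b := t - a) (by linarith) (by linarith)).comp_sub_left t
  simpa [sub_sub_cancel] using h.symm

lemma kMono (hk_nonneg : ∀ t, 0 ≤ t → 0 ≤ k t) (hk_loc : LocallyIntegrableOn k (Set.Ici 0))
    {a b I : ℝ} (ha : 0 ≤ a) (hab : a ≤ b) (hbI : b ≤ I) :
    (∫ s in a..b, k s) ≤ ∫ s in (0:ℝ)..I, k s := by
  have h1 : ((∫ s in (0:ℝ)..a, k s) + ∫ s in a..b, k s) = ∫ s in (0:ℝ)..b, k s :=
    intervalIntegral.integral_add_adjacent_intervals (kInt hk_loc le_rfl ha) (kInt hk_loc ha hab)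
  have h2 : ((∫ s in (0:ℝ)..b, k s) + ∫ s in b..I, k s) = ∫ s in (0:ℝ)..I, k s :=
    intervalIntegral.integral_add_adjacent_intervals (kInt hk_loc le_rfl (ha.trans hab))
      (kInt hk_loc (ha.trans hab) hbI)
  have h3 : 0 ≤ ∫ s in (0:ℝ)..a, k s :=
    intervalIntegral.integral_nonneg ha (fun u hu => hk_nonneg u hu.1)
  have h4 : 0 ≤ ∫ s in b..I, k s :=
    intervalIntegral.integral_nonneg hbI (fun u hu => hk_nonneg u (le_trans (ha.trans hab) hu.1))
  linarith

lemma lipAbs (hL : 0 < L) (hg : LipschitzWith (Real.toNNReal L) g) (a b : ℝ) :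
    |g a - g b| ≤ L * |a - b| := by
  have h := hg.dist_le_mul a b
  rw [Real.dist_eq, Real.dist_eq] at h
  rwa [Real.coe_toNNReal L hL.le] at h

lemma core (hk_nonneg : ∀ t, 0 ≤ t → 0 ≤ k t) (hk_loc : LocallyIntegrableOn k (Set.Ici 0))
    {a b t : ℝ} (h0a : 0 ≤ a) (hab : a ≤ b) (hbt : b ≤ t)
    {w : ℝ → ℝ} (hw : IntervalIntegrable (fun s => k (t - s) * w s) volume a b)
    {C : ℝ} (hC : ∀ s ∈ Icc a b, |w s| ≤ C) :
    |∫ s in a..b, k (t - s) * w s| ≤ C * ∫ u in (t - b)..(t - a), k u := by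
  have hkt : IntervalIntegrable (fun s => k (t - s)) volume a b := ktInt hk_loc h0a hab hbt
  have h1 : |∫ s in a..b, k (t - s) * w s| ≤ ∫ s in a..b, |k (t - s) * w s| :=
    intervalIntegral.abs_integral_le_integral_abs hab
  have h2 : (∫ s in a..b, |k (t - s) * w s|) ≤ ∫ s in a..b, k (t - s) * C := by
    apply intervalIntegral.integral_mono_on hab hw.abs (hkt.mul_const C)
    intro s hs
    have hks : 0 ≤ k (t - s) := hk_nonneg _ (by linarith [hs.2])
    rw [abs_mul, abs_of_nonneg hks]
    exact mul_le_mul_of_nonneg_left (hC s hs) hks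
  have h3 : (∫ s in a..b, k (t - s) * C) = (∫ u in (t - b)..(t - a), k u) * C := by
    rw [intervalIntegral.integral_mul_const, intervalIntegral.integral_comp_sub_left k t]
  rw [mul_comm C]
  linarith

lemma prodInt (hL : 0 < L) (hg : LipschitzWith (Real.toNNReal L) g)
    (hk_loc : LocallyIntegrableOn k (Set.Ici 0)) {y : ℝ → ℝ} (hy : Measurable y) {B I : ℝ}
    (hB : ∀ s ∈ Icc (0:ℝ) I, |y s| ≤ B) {t a b : ℝ} (htI : t ≤ I)
    (h0a : 0 ≤ a) (hab : a ≤ b) (hbt : b ≤ t) :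
    IntervalIntegrable (fun s => k (t - s) * g (y s)) volume a b := by
  have hkt : IntervalIntegrable (fun s => k (t - s)) volume a b := ktInt hk_loc h0a hab hbt
  rw [intervalIntegrable_iff] at hkt ⊢
  have hgy : AEStronglyMeasurable (fun s => g (y s)) (volume.restrict (Set.uIoc a b)) :=
    (hg.continuous.measurable.comp hy).aestronglyMeasurable
  refine Integrable.mono' (hkt.norm.const_mul (L * B + |g 0|)) (hkt.1.mul hgy) ?_
  filter_upwards [ae_restrict_mem measurableSet_uIoc] with s hs
  rw [uIoc_of_le hab] at hs
  have hsI : s ∈ Icc (0:ℝ) I := ⟨le_trans h0a hs.1.le, le_trans hs.2 (hbt.trans htI)⟩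
  have hgb : |g (y s)| ≤ L * B + |g 0| := by
    have h1 : |g (y s) - g 0| ≤ L * |y s - 0| := lipAbs hL hg (y s) 0
    have h2 : |y s| ≤ B := hB s hsI
    have h3 : |g (y s)| ≤ |g (y s) - g 0| + |g 0| := by
      calc |g (y s)| = |(g (y s) - g 0) + g 0| := by ring_nf
        _ ≤ |g (y s) - g 0| + |g 0| := abs_add_le _ _
    rw [sub_zero] at h1
    nlinarith [abs_nonneg (y s)]
  calc ‖k (t - s) * g (y s)‖ = |g (y s)| * ‖k (t - s)‖ := by
        rw [Real.norm_eq_abs, Real.norm_eq_abs, abs_mul]; ring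
    _ ≤ (L * B + |g 0|) * ‖k (t - s)‖ :=
        mul_le_mul_of_nonneg_right hgb (norm_nonneg _)


lemma intBound (hL : 0 < L) (hg : LipschitzWith (Real.toNNReal L) g)
    (hk_nonneg : ∀ t, 0 ≤ t → 0 ≤ k t) (hk_loc : LocallyIntegrableOn k (Set.Ici 0))
    {I : ℝ} {y : ℝ → ℝ} (hy : Measurable y) {B : ℝ}
    (hB : ∀ s ∈ Icc (0:ℝ) I, |y s| ≤ B) {t : ℝ} (h0t : 0 ≤ t) (htI : t ≤ I) :
    |∫ s in (0:ℝ)..t, k (t - s) * g (y s)| ≤ (L * B + |g 0|) * ∫ s in (0:ℝ)..I, k s := by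
  have hB0 : 0 ≤ B := le_trans (abs_nonneg _) (hB 0 ⟨le_rfl, h0t.trans htI⟩)
  have hIy : IntervalIntegrable (fun s => k (t - s) * g (y s)) volume 0 t :=
    prodInt hL hg hk_loc hy hB htI le_rfl h0t le_rfl
  have hC : ∀ s ∈ Icc (0:ℝ) t, |g (y s)| ≤ L * B + |g 0| := by
    intro s hs
    have h1 : |g (y s) - g 0| ≤ L * |y s - 0| := lipAbs hL hg (y s) 0
    have h2 : |y s| ≤ B := hB s ⟨hs.1, hs.2.trans htI⟩
    have h3 : |g (y s)| ≤ |g (y s) - g 0| + |g 0| := by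
      calc |g (y s)| = |(g (y s) - g 0) + g 0| := by ring_nf
        _ ≤ |g (y s) - g 0| + |g 0| := abs_add_le _ _
    rw [sub_zero] at h1
    nlinarith [abs_nonneg (y s)]
  have hcore := core hk_nonneg hk_loc le_rfl h0t le_rfl hIy hC
  have hmono : (∫ u in (t - t)..(t - 0), k u) ≤ ∫ s in (0:ℝ)..I, k s := by
    rw [sub_self, sub_zero]
    exact kMono hk_nonneg hk_loc le_rfl h0t htI
  have hCnn : 0 ≤ L * B + |g 0| := by positivity
  calc |∫ s in (0:ℝ)..t, k (t - s) * g (y s)|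
      ≤ (L * B + |g 0|) * ∫ u in (t - t)..(t - 0), k u := hcore
    _ ≤ (L * B + |g 0|) * ∫ s in (0:ℝ)..I, k s := mul_le_mul_of_nonneg_left hmono hCnn

lemma key_est (hL : 0 < L) (hg : LipschitzWith (Real.toNNReal L) g)
    (hk_nonneg : ∀ t, 0 ≤ t → 0 ≤ k t) (hk_loc : LocallyIntegrableOn k (Set.Ici 0))
    {T ε : ℝ} (hT : 0 ≤ T) (hε : 0 < ε)
    {y z : ℝ → ℝ} (hy : Measurable y) (hz : Measurable z) {By Bz : ℝ}
    (hBy : ∀ s ∈ Icc (0:ℝ) (T+ε), |y s| ≤ By) (hBz : ∀ s ∈ Icc (0:ℝ) (T+ε), |z s| ≤ Bz)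
    {C1 S : ℝ} (h1 : ∀ s ∈ Icc (0:ℝ) T, |y s - z s| ≤ C1)
    (h2 : ∀ s ∈ Icc T (T+ε), |y s - z s| ≤ S)
    {t : ℝ} (hTt : T ≤ t) (htI : t ≤ T + ε) :
    |(∫ s in (0:ℝ)..t, k (t - s) * g (y s)) - ∫ s in (0:ℝ)..t, k (t - s) * g (z s)|
      ≤ L * C1 * (∫ s in (0:ℝ)..(T+ε), k s) + L * S * ∫ s in (0:ℝ)..ε, k s := by
  have h0t : 0 ≤ t := hT.trans hTt
  have hC10 : 0 ≤ C1 := le_trans (abs_nonneg _) (h1 0 ⟨le_rfl, hT⟩)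
  have hS0 : 0 ≤ S := le_trans (abs_nonneg _) (h2 T ⟨le_rfl, by linarith⟩)
  have hIy : IntervalIntegrable (fun s => k (t - s) * g (y s)) volume 0 t :=
    prodInt hL hg hk_loc hy hBy htI le_rfl h0t le_rfl
  have hIz : IntervalIntegrable (fun s => k (t - s) * g (z s)) volume 0 t :=
    prodInt hL hg hk_loc hz hBz htI le_rfl h0t le_rfl
  set w : ℝ → ℝ := fun s => g (y s) - g (z s) with hw
  have hIw : IntervalIntegrable (fun s => k (t - s) * w s) volume 0 t := by
    have h := hIy.sub hIz
    have he : (fun s => k (t - s) * g (y s) - k (t - s) * g (z s))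
        = fun s => k (t - s) * w s := by
      funext s; simp [hw, mul_sub]
    rwa [he] at h
  have hIw1 : IntervalIntegrable (fun s => k (t - s) * w s) volume 0 T := by
    apply hIw.mono_set
    rw [uIcc_of_le h0t, uIcc_of_le hT]
    exact Icc_subset_Icc le_rfl hTt
  have hIw2 : IntervalIntegrable (fun s => k (t - s) * w s) volume T t := by
    apply hIw.mono_set
    rw [uIcc_of_le h0t, uIcc_of_le hTt]
    exact Icc_subset_Icc hT le_rfl
  have e0 : ((∫ s in (0:ℝ)..t, k (t - s) * g (y s)) - ∫ s in (0:ℝ)..t, k (t - s) * g (z s))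
      = (∫ s in (0:ℝ)..T, k (t - s) * w s) + ∫ s in T..t, k (t - s) * w s := by
    rw [intervalIntegral.integral_add_adjacent_intervals hIw1 hIw2,
      ← intervalIntegral.integral_sub hIy hIz]
    apply intervalIntegral.integral_congr
    intro s _
    simp [hw, mul_sub]
  have hCw1 : ∀ s ∈ Icc (0:ℝ) T, |w s| ≤ L * C1 := by
    intro s hs
    calc |w s| ≤ L * |y s - z s| := lipAbs hL hg _ _
      _ ≤ L * C1 := mul_le_mul_of_nonneg_left (h1 s hs) hL.le
  have hCw2 : ∀ s ∈ Icc T t, |w s| ≤ L * S := by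
    intro s hs
    calc |w s| ≤ L * |y s - z s| := lipAbs hL hg _ _
      _ ≤ L * S := mul_le_mul_of_nonneg_left (h2 s ⟨hs.1, hs.2.trans htI⟩) hL.le
  have e1 : |∫ s in (0:ℝ)..T, k (t - s) * w s| ≤ (L * C1) * ∫ s in (0:ℝ)..(T+ε), k s := by
    have hcore := core hk_nonneg hk_loc le_rfl hT hTt hIw1 hCw1
    have hmono : (∫ u in (t - T)..(t - 0), k u) ≤ ∫ s in (0:ℝ)..(T+ε), k s := by
      rw [sub_zero]
      exact kMono hk_nonneg hk_loc (by linarith) (by linarith) htI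
    calc |∫ s in (0:ℝ)..T, k (t - s) * w s| ≤ (L * C1) * ∫ u in (t - T)..(t - 0), k u := hcore
      _ ≤ (L * C1) * ∫ s in (0:ℝ)..(T+ε), k s :=
        mul_le_mul_of_nonneg_left hmono (by positivity)
  have e2 : |∫ s in T..t, k (t - s) * w s| ≤ (L * S) * ∫ s in (0:ℝ)..ε, k s := by
    have hcore := core hk_nonneg hk_loc hT hTt le_rfl hIw2 hCw2
    have hmono : (∫ u in (t - t)..(t - T), k u) ≤ ∫ s in (0:ℝ)..ε, k s := by
      rw [sub_self]
      exact kMono hk_nonneg hk_loc le_rfl (by linarith) (by linarith)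
    calc |∫ s in T..t, k (t - s) * w s| ≤ (L * S) * ∫ u in (t - t)..(t - T), k u := hcore
      _ ≤ (L * S) * ∫ s in (0:ℝ)..ε, k s := mul_le_mul_of_nonneg_left hmono (by positivity)
  calc |(∫ s in (0:ℝ)..t, k (t - s) * g (y s)) - ∫ s in (0:ℝ)..t, k (t - s) * g (z s)|
      = |(∫ s in (0:ℝ)..T, k (t - s) * w s) + ∫ s in T..t, k (t - s) * w s| := by rw [e0]
    _ ≤ |∫ s in (0:ℝ)..T, k (t - s) * w s| + |∫ s in T..t, k (t - s) * w s| := abs_add_le _ _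
    _ ≤ L * C1 * (∫ s in (0:ℝ)..(T+ε), k s) + L * S * ∫ s in (0:ℝ)..ε, k s := add_le_add e1 e2

lemma congrK {k k' : ℝ → ℝ} {I : ℝ} (hae : ∀ᵐ u : ℝ, u ∈ Icc (0:ℝ) I → k u = k' u)
    {t : ℝ} (h0t : 0 ≤ t) (htI : t ≤ I) (w : ℝ → ℝ) :
    (∫ s in (0:ℝ)..t, k (t - s) * w s) = ∫ s in (0:ℝ)..t, k' (t - s) * w s := by
  apply intervalIntegral.integral_congr_ae
  have hq : Measure.QuasiMeasurePreserving (fun s : ℝ => t - s) volume volume :=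
    (Measure.measurePreserving_sub_left volume t).quasiMeasurePreserving
  have h2 : ∀ᵐ s : ℝ, ((t - s) ∈ Icc (0:ℝ) I → k (t - s) = k' (t - s)) := by
    rw [ae_iff] at hae ⊢
    exact hq.preimage_null hae
  filter_upwards [h2] with s hs hmem
  rw [uIoc_of_le h0t] at hmem
  have hmem2 : t - s ∈ Icc (0:ℝ) I := ⟨by linarith [hmem.2], by linarith [hmem.1]⟩
  rw [hs hmem2]

lemma measG {k' y : ℝ → ℝ} (hk' : Measurable k') (hy : Measurable y) (hgc : Continuous g) :
    Measurable (fun t => ∫ s, ({p : ℝ × ℝ | 0 < p.2 ∧ p.2 ≤ p.1}.indicator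
      (fun p => k' (p.1 - p.2) * g (y p.2)) (t, s))) := by
  have hF : Measurable ({p : ℝ × ℝ | 0 < p.2 ∧ p.2 ≤ p.1}.indicator
      (fun p => k' (p.1 - p.2) * g (y p.2))) := by
    apply Measurable.indicator
    · exact (hk'.comp (measurable_fst.sub measurable_snd)).mul
        ((hgc.measurable.comp hy).comp measurable_snd)
    · exact (measurableSet_lt measurable_const measurable_snd).inter
        (measurableSet_le measurable_snd measurable_fst)
  exact hF.stronglyMeasurable.integral_prod_right'.measurable
end VolterraExt

open VolterraExt Filter

set_option maxHeartbeats 2000000 in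
theorem stmt2 (k g : ℝ → ℝ) (L T ε C_T : ℝ) (hL : 0 < L) (hT : 0 < T) (hε : 0 < ε)
    (hCT : 0 < C_T)
    (hk_nonneg : ∀ t, 0 ≤ t → 0 ≤ k t)
    (hk_loc : LocallyIntegrableOn k (Set.Ici 0))
    (hg : LipschitzWith (Real.toNNReal L) g)
    -- existence and uniqueness on [0, T] for every bounded measurable f
    (hex : ∀ f : ℝ → ℝ, BddMeasOn f T →
      ∃ x : ℝ → ℝ, IsVolterraSol k g f x T ∧
        ∀ y : ℝ → ℝ, IsVolterraSol k g f y T → ∀ t ∈ Set.Icc (0:ℝ) T, y t = x t)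
    -- the solution map on [0, T] is C_T-Lipschitz in the sup norm
    (hlip : SolMapLip k g T C_T)
    -- smallness of ε
    (hint : L * ∫ s in (0:ℝ)..ε, k s ≤ 1 / 2) :
    -- existence and uniqueness on [0, T + ε], and Lipschitz dependence with the explicit constant
    (∀ f : ℝ → ℝ, BddMeasOn f (T + ε) →
      ∃ x : ℝ → ℝ, IsVolterraSol k g f x (T + ε) ∧
        ∀ y : ℝ → ℝ, IsVolterraSol k g f y (T + ε) →
          ∀ t ∈ Set.Icc (0:ℝ) (T + ε), y t = x t) ∧
    SolMapLip k g (T + ε) (2 * (1 + L * C_T * ∫ s in (0:ℝ)..(T + ε), k s) + C_T) := by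
  have hI0 : (0:ℝ) ≤ T + ε := by linarith
  have hK0 : 0 ≤ ∫ s in (0:ℝ)..(T+ε), k s :=
    intervalIntegral.integral_nonneg hI0 (fun u hu => hk_nonneg u hu.1)
  have hKε0 : 0 ≤ ∫ s in (0:ℝ)..ε, k s :=
    intervalIntegral.integral_nonneg hε.le (fun u hu => hk_nonneg u hu.1)
  have restr : ∀ f x : ℝ → ℝ, IsVolterraSol k g f x (T + ε) → IsVolterraSol k g f x T := by
    rintro f x ⟨⟨hm, B, hB⟩, heq⟩
    exact ⟨⟨hm, B, fun s hs => hB s ⟨hs.1, by linarith [hs.2]⟩⟩,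
      fun s hs => heq s ⟨hs.1, by linarith [hs.2]⟩⟩
  have hhalf : ∀ S : ℝ, 0 ≤ S → L * S * (∫ s in (0:ℝ)..ε, k s) ≤ (1/2) * S := by
    intro S hS
    have := mul_le_mul_of_nonneg_right hint hS
    nlinarith
  constructor
  · -- existence and uniqueness
    intro f hf
    obtain ⟨hfm, Mf, hMf⟩ := hf
    have hMf0 : 0 ≤ Mf := le_trans (abs_nonneg _) (hMf 0 ⟨le_rfl, hI0⟩)
    obtain ⟨xT, hxT, huT⟩ := hex f ⟨hfm, Mf, fun t ht => hMf t ⟨ht.1, by linarith [ht.2]⟩⟩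
    obtain ⟨⟨hxTm, BT, hBT⟩, heqT⟩ := hxT
    have hBT0 : 0 ≤ BT := le_trans (abs_nonneg _) (hBT 0 ⟨le_rfl, hT.le⟩)
    -- measurable modification of k on [0, T+ε]
    have hkI : IntegrableOn k (Icc (0:ℝ) (T+ε)) volume :=
      hk_loc.integrableOn_compact_subset (fun x hx => hx.1) isCompact_Icc
    have hkaesm : AEStronglyMeasurable k (volume.restrict (Icc (0:ℝ) (T+ε))) := hkI.1
    set k' := hkaesm.mk k with hk'def
    have hk'sm : StronglyMeasurable k' := hkaesm.stronglyMeasurable_mk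
    have hae : ∀ᵐ u : ℝ, u ∈ Icc (0:ℝ) (T+ε) → k u = k' u :=
      (ae_restrict_iff' measurableSet_Icc).mp hkaesm.ae_eq_mk
    -- the iteration map
    set Φ : (ℝ → ℝ) → ℝ → ℝ := fun y t =>
      (Icc (0:ℝ) T).indicator xT t +
        (Ioc T (T+ε)).indicator (fun r => f r - ∫ s in (0:ℝ)..r, k (r - s) * g (y s)) t
      with hΦdef
    have hΦ1 : ∀ y t, t ∈ Icc (0:ℝ) T → Φ y t = xT t := by
      intro y t ht
      have h2 : t ∉ Ioc T (T+ε) := fun hc => absurd ht.2 (not_le.mpr hc.1)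
      simp [hΦdef, Set.indicator_of_mem ht, Set.indicator_of_notMem h2]
    have hΦ2 : ∀ y t, t ∈ Ioc T (T+ε) →
        Φ y t = f t - ∫ s in (0:ℝ)..t, k (t - s) * g (y s) := by
      intro y t ht
      have h1 : t ∉ Icc (0:ℝ) T := fun hc => absurd hc.2 (not_le.mpr ht.1)
      simp [hΦdef, Set.indicator_of_mem ht, Set.indicator_of_notMem h1]
    have hΦ3 : ∀ y t, t ∉ Icc (0:ℝ) (T+ε) → Φ y t = 0 := by
      intro y t ht
      have h1 : t ∉ Icc (0:ℝ) T := fun hc => ht ⟨hc.1, by linarith [hc.2]⟩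
      have h2 : t ∉ Ioc T (T+ε) := fun hc => ht ⟨by linarith [hc.1], hc.2⟩
      simp [hΦdef, Set.indicator_of_notMem h1, Set.indicator_of_notMem h2]
    have hΦm : ∀ y : ℝ → ℝ, Measurable y → Measurable (Φ y) := by
      intro y hy
      apply Measurable.add (hxTm.indicator measurableSet_Icc)
      have hrepr : (Ioc T (T+ε)).indicator
            (fun r => f r - ∫ s in (0:ℝ)..r, k (r - s) * g (y s))
          = (Ioc T (T+ε)).indicator (fun r => f r - ∫ s,
              ({p : ℝ × ℝ | 0 < p.2 ∧ p.2 ≤ p.1}.indicator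
                (fun p => k' (p.1 - p.2) * g (y p.2)) (r, s))) := by
        apply Set.indicator_congr
        intro r hr
        have h0r : (0:ℝ) ≤ r := le_trans hT.le hr.1.le
        have step1 : (∫ s in (0:ℝ)..r, k (r - s) * g (y s))
            = ∫ s in (0:ℝ)..r, k' (r - s) * g (y s) := congrK hae h0r hr.2 _
        have step2 : (∫ s in (0:ℝ)..r, k' (r - s) * g (y s))
            = ∫ s, ({p : ℝ × ℝ | 0 < p.2 ∧ p.2 ≤ p.1}.indicator
                (fun p => k' (p.1 - p.2) * g (y p.2)) (r, s)) := by
          rw [intervalIntegral.integral_of_le h0r,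
            ← MeasureTheory.integral_indicator measurableSet_Ioc]
          congr 1
        show f r - ∫ s in (0:ℝ)..r, k (r - s) * g (y s) = _
        rw [step1, step2]
      rw [hrepr]
      exact (hfm.sub (measG hk'sm.measurable hy hg.continuous)).indicator measurableSet_Ioc
    -- boundedness of the iteration
    have hΦb : ∀ (y : ℝ → ℝ) (B : ℝ), Measurable y → (∀ s, |y s| ≤ B) → 0 ≤ B →
        ∀ t, |Φ y t| ≤ BT + (Mf + (L * B + |g 0|) * ∫ s in (0:ℝ)..(T+ε), k s) := by
      intro y B hy hB hB0 t
      have hC0 : 0 ≤ (L * B + |g 0|) * ∫ s in (0:ℝ)..(T+ε), k s :=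
        mul_nonneg (by positivity) hK0
      by_cases h1 : t ∈ Icc (0:ℝ) T
      · rw [hΦ1 y t h1]
        have := hBT t h1
        linarith
      by_cases h2 : t ∈ Ioc T (T+ε)
      · rw [hΦ2 y t h2]
        have hb := intBound hL hg hk_nonneg hk_loc hy (fun s _ => hB s)
          (le_trans hT.le h2.1.le) h2.2
        have hft := hMf t ⟨le_trans hT.le h2.1.le, h2.2⟩
        calc |f t - ∫ s in (0:ℝ)..t, k (t - s) * g (y s)|
            ≤ |f t| + |∫ s in (0:ℝ)..t, k (t - s) * g (y s)| := abs_sub _ _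
          _ ≤ BT + (Mf + (L * B + |g 0|) * ∫ s in (0:ℝ)..(T+ε), k s) := by linarith
      · have h3 : t ∉ Icc (0:ℝ) (T+ε) := by
          intro hc
          rcases le_or_gt t T with h | h
          · exact h1 ⟨hc.1, h⟩
          · exact h2 ⟨h, hc.2⟩
        rw [hΦ3 y t h3]
        simp only [abs_zero]
        linarith
    -- the iterates
    set Y : ℕ → ℝ → ℝ := fun n => Φ^[n] ((Icc (0:ℝ) T).indicator xT) with hYdef
    have hY0 : Y 0 = (Icc (0:ℝ) T).indicator xT := rfl
    have hYsucc : ∀ n, Y (n+1) = Φ (Y n) := fun n => Function.iterate_succ_apply' Φ n _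
    have hYm : ∀ n, Measurable (Y n) := by
      intro n
      induction n with
      | zero => exact hxTm.indicator measurableSet_Icc
      | succ n ih => rw [hYsucc]; exact hΦm _ ih
    have hY0b : ∀ t, |Y 0 t| ≤ BT := by
      intro t
      rw [hY0]
      by_cases h : t ∈ Icc (0:ℝ) T
      · rw [Set.indicator_of_mem h]; exact hBT t h
      · rw [Set.indicator_of_notMem h]; simpa using hBT0
    have hYb : ∀ n, ∃ B, 0 ≤ B ∧ ∀ t, |Y n t| ≤ B := by
      intro n
      induction n with
      | zero => exact ⟨BT, hBT0, hY0b⟩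
      | succ n ih =>
        obtain ⟨B, hB0, hB⟩ := ih
        refine ⟨BT + (Mf + (L * B + |g 0|) * ∫ s in (0:ℝ)..(T+ε), k s), ?_, ?_⟩
        · have : 0 ≤ (L * B + |g 0|) * ∫ s in (0:ℝ)..(T+ε), k s :=
            mul_nonneg (by positivity) hK0
          linarith
        · intro t
          rw [hYsucc]
          exact hΦb (Y n) B (hYm n) hB hB0 t
    have hYT : ∀ n, ∀ t ∈ Icc (0:ℝ) T, Y n t = xT t := by
      intro n
      induction n with
      | zero => intro t ht; rw [hY0]; exact Set.indicator_of_mem ht _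
      | succ n ih => intro t ht; rw [hYsucc]; exact hΦ1 _ t ht
    obtain ⟨B1, hB10, hB1⟩ := hYb 1
    set S₀ := BT + B1 with hS₀def
    have hS₀0 : 0 ≤ S₀ := by linarith
    have hgap : ∀ n, ∀ t, |Y (n+1) t - Y n t| ≤ S₀ * (1/2)^n := by
      intro n
      induction n with
      | zero =>
        intro t
        simp only [pow_zero, mul_one]
        calc |Y 1 t - Y 0 t| ≤ |Y 1 t| + |Y 0 t| := abs_sub _ _
          _ ≤ S₀ := by have := hB1 t; have := hY0b t; rw [hS₀def]; linarith
      | succ n ih =>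
        intro t
        by_cases h2 : t ∈ Ioc T (T+ε)
        · have v2 : Y (n+1+1) t = f t - ∫ s in (0:ℝ)..t, k (t - s) * g (Y (n+1) s) := by
            rw [hYsucc (n+1)]; exact hΦ2 _ t h2
          have v1 : Y (n+1) t = f t - ∫ s in (0:ℝ)..t, k (t - s) * g (Y n s) := by
            rw [hYsucc n]; exact hΦ2 _ t h2
          rw [v2, v1]
          obtain ⟨Ba, hBa0, hBa⟩ := hYb (n+1)
          obtain ⟨Bb, hBb0, hBb⟩ := hYb n
          have hkey := key_est hL hg hk_nonneg hk_loc hT.le hε (hYm (n+1)) (hYm n)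
            (fun s _ => hBa s) (fun s _ => hBb s) (C1 := 0)
            (fun s hs => by rw [hYT (n+1) s hs, hYT n s hs]; simp)
            (S := S₀ * (1/2)^n) (fun s _ => ih s) h2.1.le h2.2
          have hnn : (0:ℝ) ≤ S₀ * (1/2)^n := by positivity
          have hh := hhalf _ hnn
          have heq : (f t - ∫ s in (0:ℝ)..t, k (t - s) * g (Y (n+1) s))
              - (f t - ∫ s in (0:ℝ)..t, k (t - s) * g (Y n s))
              = -((∫ s in (0:ℝ)..t, k (t - s) * g (Y (n+1) s))
                - ∫ s in (0:ℝ)..t, k (t - s) * g (Y n s)) := by ring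
          rw [heq, abs_neg]
          calc |(∫ s in (0:ℝ)..t, k (t - s) * g (Y (n+1) s))
                - ∫ s in (0:ℝ)..t, k (t - s) * g (Y n s)|
              ≤ L * 0 * (∫ s in (0:ℝ)..(T+ε), k s)
                + L * (S₀ * (1/2)^n) * ∫ s in (0:ℝ)..ε, k s := hkey
            _ ≤ S₀ * (1/2)^(n+1) := by rw [pow_succ]; nlinarith
        · have heqt : Y (n+1+1) t = Y (n+1) t := by
            by_cases h1 : t ∈ Icc (0:ℝ) T
            · rw [hYsucc (n+1), hYsucc n, hΦ1 _ t h1, hΦ1 _ t h1]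
            · have h3 : t ∉ Icc (0:ℝ) (T+ε) := by
                intro hc
                rcases le_or_gt t T with h | h
                · exact h1 ⟨hc.1, h⟩
                · exact h2 ⟨h, hc.2⟩
              rw [hYsucc (n+1), hYsucc n, hΦ3 _ t h3, hΦ3 _ t h3]
          rw [heqt]
          simp only [sub_self, abs_zero]
          positivity
    -- Cauchy sequence, limit
    have hcau : ∀ t : ℝ, ∃ l, Tendsto (fun n => Y n t) atTop (nhds l) := by
      intro t
      apply cauchySeq_tendsto_of_complete
      apply cauchySeq_of_le_geometric (1/2) S₀ (by norm_num)
      intro n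
      rw [Real.dist_eq, abs_sub_comm]
      exact hgap n t
    set x : ℝ → ℝ := fun t => (hcau t).choose with hxdef
    have hxt : ∀ t, Tendsto (fun n => Y n t) atTop (nhds (x t)) := fun t => (hcau t).choose_spec
    have hxm : Measurable x := measurable_of_tendsto_metrizable hYm (tendsto_pi_nhds.mpr hxt)
    have htail : ∀ n t, |Y n t - x t| ≤ S₀ * (1/2)^n * 2 := by
      intro n t
      have h := dist_le_of_le_geometric_of_tendsto (1/2) S₀ (by norm_num : (1/2:ℝ) < 1)
        (fun m => by rw [Real.dist_eq, abs_sub_comm]; exact hgap m t) (hxt t) n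
      rw [Real.dist_eq] at h
      have h2 : S₀ * (1/2)^n / (1 - 1/2) = S₀ * (1/2)^n * 2 := by ring
      linarith
    have hxb : ∀ t, |x t| ≤ BT + S₀ * 2 := by
      intro t
      have h := htail 0 t
      simp only [pow_zero, mul_one] at h
      have h2 := hY0b t
      have h3 : |x t| ≤ |Y 0 t| + |Y 0 t - x t| := by
        calc |x t| = |Y 0 t - (Y 0 t - x t)| := by congr 1; ring
          _ ≤ |Y 0 t| + |Y 0 t - x t| := abs_sub _ _
      linarith
    have hxIb : ∀ s ∈ Icc (0:ℝ) (T+ε), |x s| ≤ BT + S₀ * 2 := fun s _ => hxb s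
    have hxT' : ∀ t ∈ Icc (0:ℝ) T, x t = xT t := by
      intro t ht
      have h1 : Tendsto (fun n => Y n t) atTop (nhds (xT t)) := by
        have he : (fun n => Y n t) = fun _ => xT t := funext fun n => hYT n t ht
        rw [he]
        exact tendsto_const_nhds
      exact tendsto_nhds_unique (hxt t) h1
    -- convergence of the integrals
    have hintlim : ∀ t ∈ Ioc T (T+ε),
        Tendsto (fun n => ∫ s in (0:ℝ)..t, k (t - s) * g (Y n s)) atTop
          (nhds (∫ s in (0:ℝ)..t, k (t - s) * g (x s))) := by
      intro t ht
      rw [tendsto_iff_dist_tendsto_zero]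
      apply squeeze_zero (fun n => dist_nonneg) (g := fun n => S₀ * (1/2)^n)
      · intro n
        rw [Real.dist_eq]
        obtain ⟨Bn, hBn0, hBn⟩ := hYb n
        have hkey := key_est hL hg hk_nonneg hk_loc hT.le hε (hYm n) hxm
          (fun s _ => hBn s) hxIb (C1 := 0)
          (fun s hs => by rw [hYT n s hs, hxT' s hs]; simp)
          (S := S₀ * (1/2)^n * 2) (fun s _ => htail n s) ht.1.le ht.2
        have hnn : (0:ℝ) ≤ S₀ * (1/2)^n * 2 := by positivity
        have hh := hhalf _ hnn
        nlinarith
      · have h1 : Tendsto (fun n : ℕ => (1/2:ℝ)^n) atTop (nhds 0) :=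
          tendsto_pow_atTop_nhds_zero_of_lt_one (by norm_num) (by norm_num)
        simpa using h1.const_mul S₀
    -- the equation
    have hxeq : ∀ t ∈ Icc (0:ℝ) (T+ε),
        x t + ∫ s in (0:ℝ)..t, k (t - s) * g (x s) = f t := by
      intro t ht
      rcases le_or_gt t T with hle | hlt
      · have h1 : x t = xT t := hxT' t ⟨ht.1, hle⟩
        have h2 : (∫ s in (0:ℝ)..t, k (t - s) * g (x s))
            = ∫ s in (0:ℝ)..t, k (t - s) * g (xT s) := by
          apply intervalIntegral.integral_congr
          intro s hs
          rw [Set.uIcc_of_le ht.1] at hs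
          show k (t - s) * g (x s) = k (t - s) * g (xT s)
          rw [hxT' s ⟨hs.1, hs.2.trans hle⟩]
        rw [h1, h2]
        exact heqT t ⟨ht.1, hle⟩
      · have ht2 : t ∈ Ioc T (T+ε) := ⟨hlt, ht.2⟩
        have hseq : Tendsto (fun n => Y (n+1) t) atTop
            (nhds (f t - ∫ s in (0:ℝ)..t, k (t - s) * g (x s))) := by
          have he : (fun n => Y (n+1) t)
              = fun n => f t - ∫ s in (0:ℝ)..t, k (t - s) * g (Y n s) :=
            funext fun n => by rw [hYsucc n]; exact hΦ2 _ t ht2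
          rw [he]
          exact (hintlim t ht2).const_sub _
        have hseq2 : Tendsto (fun n => Y (n+1) t) atTop (nhds (x t)) :=
          (hxt t).comp (tendsto_add_atTop_nat 1)
        have := tendsto_nhds_unique hseq2 hseq
        linarith
    refine ⟨x, ⟨⟨hxm, BT + S₀ * 2, fun t _ => hxb t⟩, hxeq⟩, ?_⟩
    -- uniqueness
    intro y hy t ht
    obtain ⟨⟨hym, By, hBy⟩, heqy⟩ := hy
    have hyT : ∀ s ∈ Icc (0:ℝ) T, y s = xT s :=
      huT y ⟨⟨hym, By, fun s hs => hBy s ⟨hs.1, by linarith [hs.2]⟩⟩,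
        fun s hs => heqy s ⟨hs.1, by linarith [hs.2]⟩⟩
    have hBy0 : 0 ≤ By := le_trans (abs_nonneg _) (hBy 0 ⟨le_rfl, hI0⟩)
    set S := By + (BT + S₀ * 2) with hSdef
    have hS0 : 0 ≤ S := by linarith
    have hdn : ∀ n, ∀ s ∈ Icc T (T+ε), |y s - x s| ≤ S * (1/2)^n := by
      intro n
      induction n with
      | zero =>
        intro s hs
        simp only [pow_zero, mul_one]
        have h1 := hBy s ⟨le_trans hT.le hs.1, hs.2⟩
        have h2 := hxb s
        calc |y s - x s| ≤ |y s| + |x s| := abs_sub _ _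
          _ ≤ S := by rw [hSdef]; linarith
      | succ n ih =>
        intro s hs
        have h0s : 0 ≤ s := le_trans hT.le hs.1
        have hey := heqy s ⟨h0s, hs.2⟩
        have hex' := hxeq s ⟨h0s, hs.2⟩
        have hkey := key_est hL hg hk_nonneg hk_loc hT.le hε hym hxm hBy hxIb
          (C1 := 0) (fun u hu => by rw [hyT u hu, hxT' u hu]; simp)
          (S := S * (1/2)^n) ih hs.1 hs.2
        have hnn : (0:ℝ) ≤ S * (1/2)^n := by positivity
        have hh := hhalf _ hnn
        have he2 : y s - x s = (∫ u in (0:ℝ)..s, k (s - u) * g (x u))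
            - ∫ u in (0:ℝ)..s, k (s - u) * g (y u) := by linarith
        rw [he2, abs_sub_comm, pow_succ]
        nlinarith
    rcases le_or_gt t T with hle | hlt
    · rw [hyT t ⟨ht.1, hle⟩, hxT' t ⟨ht.1, hle⟩]
    · have hmem : t ∈ Icc T (T+ε) := ⟨hlt.le, ht.2⟩
      have h0 : |y t - x t| ≤ 0 := by
        have hlim : Tendsto (fun n : ℕ => S * (1/2:ℝ)^n) atTop (nhds 0) := by
          have h1 : Tendsto (fun n : ℕ => (1/2:ℝ)^n) atTop (nhds 0) :=
            tendsto_pow_atTop_nhds_zero_of_lt_one (by norm_num) (by norm_num)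
          simpa using h1.const_mul S
        exact ge_of_tendsto hlim (Filter.Eventually.of_forall (fun n => hdn n t hmem))
      have := abs_nonneg (y t - x t)
      have h3 : y t - x t = 0 := by
        have := abs_nonpos_iff.mp h0
        exact this
      linarith [h3]
  · -- Lipschitz dependence
    intro f₁ f₂ x₁ x₂ h₁ h₂ M hM t ht
    obtain ⟨⟨h1m, B₁, hB₁⟩, heq₁⟩ := h₁
    obtain ⟨⟨h2m, B₂, hB₂⟩, heq₂⟩ := h₂
    have hM0 : 0 ≤ M := le_trans (abs_nonneg _) (hM 0 ⟨le_rfl, hI0⟩)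
    have hB₁0 : 0 ≤ B₁ := le_trans (abs_nonneg _) (hB₁ 0 ⟨le_rfl, hI0⟩)
    have hB₂0 : 0 ≤ B₂ := le_trans (abs_nonneg _) (hB₂ 0 ⟨le_rfl, hI0⟩)
    have hlipT : ∀ s ∈ Icc (0:ℝ) T, |x₁ s - x₂ s| ≤ C_T * M := by
      apply hlip f₁ f₂ x₁ x₂
        (⟨⟨h1m, B₁, fun s hs => hB₁ s ⟨hs.1, by linarith [hs.2]⟩⟩,
          fun s hs => heq₁ s ⟨hs.1, by linarith [hs.2]⟩⟩)
        (⟨⟨h2m, B₂, fun s hs => hB₂ s ⟨hs.1, by linarith [hs.2]⟩⟩,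
          fun s hs => heq₂ s ⟨hs.1, by linarith [hs.2]⟩⟩)
        M (fun s hs => hM s ⟨hs.1, by linarith [hs.2]⟩)
    have hLCK : 0 ≤ L * C_T * ∫ s in (0:ℝ)..(T+ε), k s :=
      mul_nonneg (mul_nonneg hL.le hCT.le) hK0
    set A := M * (1 + L * C_T * ∫ s in (0:ℝ)..(T+ε), k s) with hAdef
    have hA0 : 0 ≤ A := mul_nonneg hM0 (by linarith)
    set S₁ := B₁ + B₂ with hS₁def
    have hS₁0 : 0 ≤ S₁ := by linarith
    have hrec : ∀ n, ∀ s ∈ Icc T (T+ε), |x₁ s - x₂ s| ≤ 2 * A + S₁ * (1/2)^n := by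
      intro n
      induction n with
      | zero =>
        intro s hs
        simp only [pow_zero, mul_one]
        have hb1 := hB₁ s ⟨le_trans hT.le hs.1, hs.2⟩
        have hb2 := hB₂ s ⟨le_trans hT.le hs.1, hs.2⟩
        calc |x₁ s - x₂ s| ≤ |x₁ s| + |x₂ s| := abs_sub _ _
          _ ≤ 2 * A + S₁ := by rw [hS₁def]; linarith
      | succ n ih =>
        intro s hs
        have h0s : 0 ≤ s := le_trans hT.le hs.1
        have he1 := heq₁ s ⟨h0s, hs.2⟩
        have he2 := heq₂ s ⟨h0s, hs.2⟩
        have hfs := hM s ⟨h0s, hs.2⟩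
        have hkey := key_est hL hg hk_nonneg hk_loc hT.le hε h1m h2m hB₁ hB₂
          (C1 := C_T * M) hlipT (S := 2 * A + S₁ * (1/2)^n) ih hs.1 hs.2
        have hnn : (0:ℝ) ≤ 2 * A + S₁ * (1/2)^n := by positivity
        have hh := hhalf _ hnn
        have hdecomp : x₁ s - x₂ s = (f₁ s - f₂ s)
            + ((∫ u in (0:ℝ)..s, k (s - u) * g (x₂ u))
              - ∫ u in (0:ℝ)..s, k (s - u) * g (x₁ u)) := by linarith
        have habs : |x₁ s - x₂ s| ≤ |f₁ s - f₂ s|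
            + |(∫ u in (0:ℝ)..s, k (s - u) * g (x₁ u))
              - ∫ u in (0:ℝ)..s, k (s - u) * g (x₂ u)| := by
          rw [hdecomp]
          calc _ ≤ |f₁ s - f₂ s| + |(∫ u in (0:ℝ)..s, k (s - u) * g (x₂ u))
              - ∫ u in (0:ℝ)..s, k (s - u) * g (x₁ u)| := abs_add_le _ _
            _ = _ := by rw [abs_sub_comm ((∫ u in (0:ℝ)..s, k (s - u) * g (x₂ u)))]
        rw [pow_succ, hAdef]
        rw [hAdef] at hh hkey
        nlinarith
    rcases le_or_gt t T with hle | hlt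
    · have h1 := hlipT t ⟨ht.1, hle⟩
      have h2 : 0 ≤ 2 * (1 + L * C_T * ∫ s in (0:ℝ)..(T + ε), k s) * M := by nlinarith
      nlinarith
    · have hmem : t ∈ Icc T (T+ε) := ⟨hlt.le, ht.2⟩
      have hbd : |x₁ t - x₂ t| ≤ 2 * A := by
        have hlim : Tendsto (fun n : ℕ => 2 * A + S₁ * (1/2:ℝ)^n) atTop (nhds (2 * A)) := by
          have h1 : Tendsto (fun n : ℕ => (1/2:ℝ)^n) atTop (nhds 0) :=
            tendsto_pow_atTop_nhds_zero_of_lt_one (by norm_num) (by norm_num)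
          have h2 := (h1.const_mul S₁).const_add (2 * A)
          simpa using h2
        exact ge_of_tendsto hlim (Filter.Eventually.of_forall (fun n => hrec n t hmem))
      rw [hAdef] at hbd
      nlinarith [mul_nonneg hCT.le hM0]
end

section
/- Let G : (0,∞) → [0,∞) be completely monotone and square-integrable on [0,T], with Bernstein representation G(t) = ∫₀^∞ e^{−λt} μ(dλ) for a finite measure μ. Let 𝐆 be the convolution operator with kernel G on L²([0,T]), and 𝐇 the operator (𝐇v)(t) = κ_∞ ∫₀ᵗ v(s) ds with κ_∞ ≥ 0. Then ⟨𝐇v, 𝐆v⟩ ≥ 0 for every v ∈ L²([0,T]). -/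
open MeasureTheory Set

theorem stmt6 (T kappa : ℝ) (hT : 0 < T) (hkappa : 0 ≤ kappa)
    (G : ℝ → ℝ) (μ : Measure ℝ) [IsFiniteMeasure μ]
    (hμ : μ (Set.Iio 0) = 0)
    -- Bernstein representation of the completely monotone kernel G
    (hG : ∀ t > (0:ℝ), G t = ∫ l, Real.exp (-(l * t)) ∂μ)
    (hGL2 : IntegrableOn (fun t => (G t) ^ 2) (Set.Icc 0 T))
    (v : ℝ → ℝ) (hv : Measurable v)
    (hvInt : IntegrableOn v (Set.Icc 0 T))
    (hvL2 : IntegrableOn (fun t => (v t) ^ 2) (Set.Icc 0 T)) :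
    0 ≤ ∫ t in (0:ℝ)..T,
        (kappa * ∫ s in (0:ℝ)..t, v s) * (∫ s in (0:ℝ)..t, G (t - s) * v s) := by
  have hμae : ∀ᵐ l ∂μ, 0 ≤ l := by
    rw [ae_iff]
    convert hμ using 2
    ext l; simp [Set.mem_Iio]
  set w : ℝ → ℝ := (Set.Icc 0 T).indicator v with hw_def
  have hw_meas : Measurable w := hv.indicator measurableSet_Icc
  have hw_int : Integrable w := (integrable_indicator_iff measurableSet_Icc).2 hvInt
  set Wf : ℝ → ℝ → ℝ := fun l t => ∫ s in (0:ℝ)..t, Real.exp (-(l * (t - s))) * w s with hWf_def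
  set Vf : ℝ → ℝ := fun t => ∫ s in (0:ℝ)..t, w s with hVf_def
  have hexp_int : ∀ (l t : ℝ), Integrable (fun s => Real.exp (-(l * (t - s))) * w s) := by
    intro l t
    have : (fun s => Real.exp (-(l * (t - s))) * w s)
        = (Set.Icc (0:ℝ) T).indicator (fun s => Real.exp (-(l * (t - s))) * v s) := by
      ext s
      by_cases hs : s ∈ Set.Icc (0:ℝ) T <;>
        simp [hw_def, Set.indicator_of_mem, Set.indicator_of_notMem, hs]
    rw [this, integrable_indicator_iff measurableSet_Icc]
    exact IntegrableOn.continuousOn_mul (by fun_prop) hvInt isCompact_Icc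
  have hVcont : Continuous Vf := hw_int.continuous_primitive 0
  have hWf_eq : ∀ l t, Wf l t
      = Real.exp (-(l * t)) * ∫ s in (0:ℝ)..t, Real.exp (l * s) * w s := by
    intro l t
    rw [hWf_def]
    simp only
    rw [← intervalIntegral.integral_const_mul]
    congr 1
    ext s
    rw [← mul_assoc, ← Real.exp_add]
    ring_nf
  have hexp0_int : ∀ l, Integrable (fun s => Real.exp (l * s) * w s) := by
    intro l
    have hi := hexp_int l 0
    simp only [zero_sub, mul_neg, neg_neg] at hi
    exact hi
  have hWcont : ∀ l, Continuous (Wf l) := by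
    intro l
    have h1 : Continuous fun t => ∫ s in (0:ℝ)..t, Real.exp (l * s) * w s :=
      (hexp0_int l).continuous_primitive 0
    have : Wf l = fun t => Real.exp (-(l * t)) * ∫ s in (0:ℝ)..t, Real.exp (l * s) * w s := by
      ext t; exact hWf_eq l t
    rw [this]
    fun_prop
  have hW_bound : ∀ l, 0 ≤ l → ∀ t, 0 ≤ t → |Wf l t| ≤ ∫ s, |w s| := by
    intro l hl t ht
    calc |Wf l t| ≤ ∫ s in (0:ℝ)..t, |Real.exp (-(l * (t - s))) * w s| :=
          intervalIntegral.abs_integral_le_integral_abs ht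
      _ ≤ ∫ s in (0:ℝ)..t, |w s| := by
          apply intervalIntegral.integral_mono_on ht
            ((hexp_int l t).abs.intervalIntegrable) (hw_int.abs.intervalIntegrable)
          intro s hs
          rw [abs_mul]
          have h1 : Real.exp (-(l * (t - s))) ≤ 1 := by
            rw [← Real.exp_zero]
            apply Real.exp_le_exp.2
            have : 0 ≤ t - s := by linarith [hs.2]
            nlinarith
          have h2 : 0 < Real.exp (-(l * (t - s))) := Real.exp_pos _
          rw [abs_of_pos h2]
          nlinarith [abs_nonneg (w s)]
      _ ≤ ∫ s, |w s| := by
          rw [intervalIntegral.integral_of_le ht]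
          exact setIntegral_le_integral hw_int.abs
            (Filter.Eventually.of_forall fun s => abs_nonneg _)
  -- the key identity : Vf t - Wf l t = l * ∫₀ᵗ Wf l
  have hId : ∀ l, 0 ≤ l → ∀ t, 0 ≤ t →
      Vf t - Wf l t = l * ∫ u in (0:ℝ)..t, Wf l u := by
    intro l hl t ht
    set ν := volume.restrict (Set.Ioc (0:ℝ) t) with hν
    have : IsFiniteMeasure ν := by
      rw [hν]; constructor
      rw [Measure.restrict_apply_univ]
      exact measure_Ioc_lt_top
    set F : ℝ × ℝ → ℝ :=
      {p : ℝ × ℝ | p.2 < p.1}.indicator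
        (fun p => l * Real.exp (-(l * (p.1 - p.2))) * w p.2) with hF_def
    have hset : MeasurableSet {p : ℝ × ℝ | p.2 < p.1} :=
      measurableSet_lt measurable_snd measurable_fst
    have hF_meas : Measurable F := by
      apply Measurable.indicator _ hset
      fun_prop
    have hF_bound : ∀ p, |F p| ≤ l * |w p.2| := by
      intro p
      rw [hF_def]
      by_cases hp : p ∈ {p : ℝ × ℝ | p.2 < p.1}
      · rw [Set.indicator_of_mem hp]
        have h1 : Real.exp (-(l * (p.1 - p.2))) ≤ 1 := by
          rw [← Real.exp_zero]
          apply Real.exp_le_exp.2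
          have : (0:ℝ) ≤ p.1 - p.2 := by have := hp.out; linarith
          nlinarith
        have h2 : 0 < Real.exp (-(l * (p.1 - p.2))) := Real.exp_pos _
        rw [abs_mul, abs_mul, abs_of_nonneg hl, abs_of_pos h2]
        nlinarith [abs_nonneg (w p.2), mul_le_mul_of_nonneg_left h1 hl]
      · rw [Set.indicator_of_notMem hp]
        simp
        positivity
    have hg_int : Integrable (fun p : ℝ × ℝ => l * |w p.2|) (ν.prod ν) := by
      have hms : AEStronglyMeasurable (fun p : ℝ × ℝ => l * |w p.2|) (ν.prod ν) :=
        (((hw_meas.comp measurable_snd).abs).const_mul l).aestronglyMeasurable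
      refine (integrable_prod_iff hms).2 ⟨?_, ?_⟩
      · exact Filter.Eventually.of_forall fun u => (hw_int.abs.restrict.const_mul l)
      · apply (integrable_const (l * ∫ s, |w s| ∂ν)).congr
        apply Filter.Eventually.of_forall
        intro u
        simp only [norm_mul, Real.norm_eq_abs, abs_abs, abs_of_nonneg hl]
        rw [MeasureTheory.integral_const_mul]
    have hF_int : Integrable F (ν.prod ν) := by
      apply Integrable.mono' hg_int (hF_meas.aestronglyMeasurable)
      exact Filter.Eventually.of_forall fun p => hF_bound p
    have swap := MeasureTheory.integral_integral_swap (f := fun u s => F (u, s))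
      (μ := ν) (ν := ν) (by exact hF_int)
    have hLHS : (∫ u, (∫ s, F (u, s) ∂ν) ∂ν) = l * ∫ u in (0:ℝ)..t, Wf l u := by
      have inner : ∀ u ∈ Set.Ioc (0:ℝ) t, (∫ s, F (u, s) ∂ν) = l * Wf l u := by
        intro u hu
        have h1 : (fun s => F (u, s))
            = (Set.Iio u).indicator (fun s => l * (Real.exp (-(l * (u - s))) * w s)) := by
          ext s
          rw [hF_def]
          by_cases h : s < u <;>
            simp [Set.indicator, h, Set.mem_Iio, mul_assoc]
        rw [h1, hν, MeasureTheory.integral_indicator measurableSet_Iio,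
          Measure.restrict_restrict measurableSet_Iio]
        have h2 : Set.Iio u ∩ Set.Ioc 0 t = Set.Ioo 0 u := by
          ext x
          simp only [Set.mem_inter_iff, Set.mem_Iio, Set.mem_Ioc, Set.mem_Ioo]
          constructor
          · rintro ⟨h1, h2, h3⟩; exact ⟨h2, h1⟩
          · rintro ⟨h1, h2⟩; exact ⟨h2, h1, by linarith [hu.2]⟩
        rw [h2, ← MeasureTheory.integral_Ioc_eq_integral_Ioo,
          MeasureTheory.integral_const_mul, hWf_def]
        simp only
        rw [intervalIntegral.integral_of_le hu.1.le]
      calc (∫ u, (∫ s, F (u, s) ∂ν) ∂ν) = ∫ u in Set.Ioc (0:ℝ) t, l * Wf l u := by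
            rw [hν]
            exact setIntegral_congr_fun measurableSet_Ioc inner
        _ = l * ∫ u in (0:ℝ)..t, Wf l u := by
            rw [MeasureTheory.integral_const_mul, intervalIntegral.integral_of_le ht]
    have hRHS : (∫ s, (∫ u, F (u, s) ∂ν) ∂ν) = Vf t - Wf l t := by
      have inner : ∀ s ∈ Set.Ioc (0:ℝ) t,
          (∫ u, F (u, s) ∂ν) = (1 - Real.exp (-(l * (t - s)))) * w s := by
        intro s hs
        have h1 : (fun u => F (u, s))
            = (Set.Ioi s).indicator (fun u => (l * Real.exp (-(l * (u - s)))) * w s) := by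
          ext u
          rw [hF_def]
          by_cases h : s < u <;>
            simp [Set.indicator, h, Set.mem_Ioi]
        rw [h1, hν, MeasureTheory.integral_indicator measurableSet_Ioi,
          Measure.restrict_restrict measurableSet_Ioi]
        have h2 : Set.Ioi s ∩ Set.Ioc 0 t = Set.Ioc s t := by
          ext x
          simp only [Set.mem_inter_iff, Set.mem_Ioi, Set.mem_Ioc]
          constructor
          · rintro ⟨h1, h2, h3⟩; exact ⟨h1, h3⟩
          · rintro ⟨h1, h2⟩; exact ⟨h1, by linarith [hs.1], h2⟩
        rw [h2, MeasureTheory.integral_mul_const, ← intervalIntegral.integral_of_le hs.2]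
        congr 1
        have hder : ∀ u ∈ Set.uIcc s t,
            HasDerivAt (fun u => -Real.exp (-(l * (u - s)))) (l * Real.exp (-(l * (u - s)))) u := by
          intro u _
          have h3 : HasDerivAt (fun u : ℝ => -(l * (u - s))) (-l) u := by
            have := ((hasDerivAt_id u).sub_const s).const_mul l
            simpa using this.fun_neg
          have h4 := h3.exp
          have h5 := h4.fun_neg
          exact h5.congr_deriv (by ring)
        rw [intervalIntegral.integral_eq_sub_of_hasDerivAt hder
          ((by fun_prop : Continuous fun u => l * Real.exp (-(l * (u - s)))).intervalIntegrable s t)]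
        simp
        ring
      calc (∫ s, (∫ u, F (u, s) ∂ν) ∂ν)
          = ∫ s in Set.Ioc (0:ℝ) t, (1 - Real.exp (-(l * (t - s)))) * w s := by
            rw [hν]
            exact setIntegral_congr_fun measurableSet_Ioc inner
        _ = (∫ s in Set.Ioc (0:ℝ) t, w s)
            - ∫ s in Set.Ioc (0:ℝ) t, Real.exp (-(l * (t - s))) * w s := by
            rw [← MeasureTheory.integral_sub hw_int.restrict ((hexp_int l t).restrict)]
            congr 1
            ext s
            ring
        _ = Vf t - Wf l t := by
            rw [hVf_def, hWf_def]
            simp only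
            rw [intervalIntegral.integral_of_le ht, intervalIntegral.integral_of_le ht]
    rw [hLHS, hRHS] at swap
    linarith
  -- positivity for each exponential kernel
  have hPos : ∀ l, 0 ≤ l → 0 ≤ ∫ t in (0:ℝ)..T, Vf t * Wf l t := by
    intro l hl
    set Wl : ℝ → ℝ := Wf l with hWl_def
    have hWlcont : Continuous Wl := hWcont l
    set U : ℝ → ℝ := fun t => ∫ u in (0:ℝ)..t, Wl u with hU_def
    have hU : ∀ t, HasDerivAt U (Wl t) t := fun t =>
      intervalIntegral.integral_hasDerivAt_right (hWlcont.intervalIntegrable _ _)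
        (hWlcont.stronglyMeasurableAtFilter _ _) hWlcont.continuousAt
    have hUcont : Continuous U := by
      rw [continuous_iff_continuousAt]
      exact fun t => (hU t).continuousAt
    have hsplit : ∫ t in (0:ℝ)..T, Vf t * Wl t
        = (∫ t in (0:ℝ)..T, Wl t * Wl t) + l * ∫ t in (0:ℝ)..T, U t * Wl t := by
      rw [← intervalIntegral.integral_const_mul, ← intervalIntegral.integral_add (f := fun t => Wl t * Wl t)
        (g := fun t => l * (U t * Wl t)) ((hWlcont.mul hWlcont).intervalIntegrable _ _)
        ((continuous_const.mul (hUcont.mul hWlcont)).intervalIntegrable _ _)]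
      apply intervalIntegral.integral_congr
      intro t ht
      rw [Set.uIcc_of_le hT.le] at ht
      have h1 := hId l hl t ht.1
      have h2 : Vf t = Wl t + l * U t := by rw [hU_def]; simp only; linarith
      show Vf t * Wl t = Wl t * Wl t + l * (U t * Wl t)
      rw [h2]; ring
    have hUW : ∫ t in (0:ℝ)..T, U t * Wl t = U T * U T / 2 := by
      have hg : ∀ t ∈ Set.uIcc (0:ℝ) T, HasDerivAt (fun t => U t * U t / 2) (U t * Wl t) t := by
        intro t _
        have := ((hU t).fun_mul (hU t)).div_const 2
        exact this.congr_deriv (by ring)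
      rw [intervalIntegral.integral_eq_sub_of_hasDerivAt hg
        ((hUcont.mul hWlcont).intervalIntegrable _ _)]
      have : U 0 = 0 := intervalIntegral.integral_same
      rw [this]
      ring
    rw [hsplit, hUW]
    have h1 : 0 ≤ ∫ t in (0:ℝ)..T, Wl t * Wl t :=
      intervalIntegral.integral_nonneg hT.le (fun t _ => mul_self_nonneg _)
    nlinarith [mul_self_nonneg (U T)]
  -- inner representation: the G-convolution equals the μ-mixture of exponential convolutions
  have hInner : ∀ t ∈ Set.Ioc (0:ℝ) T,
      (∫ s in (0:ℝ)..t, G (t - s) * v s) = ∫ l, Wf l t ∂μ := by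
    intro t ht
    have ht0 : 0 < t := ht.1
    have e1 : (∫ s in (0:ℝ)..t, G (t - s) * v s) = ∫ s in (0:ℝ)..t, G (t - s) * w s := by
      apply intervalIntegral.integral_congr
      intro s hs
      rw [Set.uIcc_of_le ht0.le] at hs
      have hsmem : s ∈ Set.Icc (0:ℝ) T := ⟨hs.1, le_trans hs.2 ht.2⟩
      show G (t - s) * v s = G (t - s) * w s
      rw [hw_def, Set.indicator_of_mem hsmem]
    rw [e1, intervalIntegral.integral_of_le ht0.le, MeasureTheory.integral_Ioc_eq_integral_Ioo]
    have e2 : ∀ s ∈ Set.Ioo (0:ℝ) t,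
        G (t - s) * w s = ∫ l, Real.exp (-(l * (t - s))) * w s ∂μ := by
      intro s hs
      rw [hG (t - s) (by linarith [hs.2]), ← MeasureTheory.integral_mul_const]
    rw [setIntegral_congr_fun measurableSet_Ioo e2]
    set ν := volume.restrict (Set.Ioo (0:ℝ) t) with hν
    have hνfin : IsFiniteMeasure ν := by
      rw [hν]; constructor
      rw [Measure.restrict_apply_univ]
      exact measure_Ioo_lt_top
    have hae2 : ∀ᵐ p : ℝ × ℝ ∂(ν.prod μ), 0 ≤ p.2 := by
      rw [ae_iff]
      have h1 : {p : ℝ × ℝ | ¬ 0 ≤ p.2} = Set.univ ×ˢ Set.Iio 0 := by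
        ext p; simp [not_le]
      rw [h1, Measure.prod_prod, hμ, mul_zero]
    have hae1 : ∀ᵐ p : ℝ × ℝ ∂(ν.prod μ), p.1 ∈ Set.Ioo (0:ℝ) t := by
      rw [ae_iff]
      have h1 : {p : ℝ × ℝ | ¬ p.1 ∈ Set.Ioo (0:ℝ) t} = (Set.Ioo (0:ℝ) t)ᶜ ×ˢ Set.univ := by
        ext p; simp
      rw [h1, Measure.prod_prod, hν,
        Measure.restrict_apply measurableSet_Ioo.compl, Set.compl_inter_self,
        measure_empty, zero_mul]
    have hint : Integrable (fun p : ℝ × ℝ => Real.exp (-(p.2 * (t - p.1))) * w p.1)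
        (ν.prod μ) := by
      apply Integrable.mono' (g := fun p : ℝ × ℝ => |w p.1|)
      · have hms : AEStronglyMeasurable (fun p : ℝ × ℝ => |w p.1|) (ν.prod μ) :=
          ((hw_meas.comp measurable_fst).abs).aestronglyMeasurable
        refine (integrable_prod_iff hms).2 ⟨?_, ?_⟩
        · exact Filter.Eventually.of_forall fun s => by
            simpa using integrable_const (μ := μ) (|w s|)
        · apply Integrable.congr ((hw_int.abs.restrict).mul_const (μ Set.univ).toReal)
          apply Filter.Eventually.of_forall
          intro x
          simp [MeasureTheory.integral_const, smul_eq_mul, measureReal_def, Real.norm_eq_abs, abs_abs, mul_comm]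
      · exact ((Measurable.exp (by fun_prop)).mul
          (hw_meas.comp measurable_fst)).aestronglyMeasurable
      · filter_upwards [hae1, hae2] with p hp1 hp2
        rw [Real.norm_eq_abs, abs_mul]
        have h1 : Real.exp (-(p.2 * (t - p.1))) ≤ 1 := by
          rw [← Real.exp_zero]
          apply Real.exp_le_exp.2
          have : 0 ≤ t - p.1 := by linarith [hp1.2]
          nlinarith
        have h2 : 0 < Real.exp (-(p.2 * (t - p.1))) := Real.exp_pos _
        rw [abs_of_pos h2]
        nlinarith [abs_nonneg (w p.1)]
    have swap := MeasureTheory.integral_integral_swap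
      (f := fun s l => Real.exp (-(l * (t - s))) * w s) (μ := ν) (ν := μ) (by exact hint)
    rw [hν] at swap
    rw [swap]
    apply integral_congr_ae
    apply Filter.Eventually.of_forall
    intro l
    show (∫ x in Set.Ioo (0:ℝ) t, Real.exp (-(l * (t - x))) * w x) = Wf l t
    rw [← MeasureTheory.integral_Ioc_eq_integral_Ioo, hWf_def]
    simp only
    rw [intervalIntegral.integral_of_le ht0.le]
  -- joint measurability of (t, l) ↦ Wf l t  (as an indicator integral)
  have hJM : StronglyMeasurable (fun p : ℝ × ℝ =>
      ∫ s, (Set.Ioc (0:ℝ) p.1).indicator (fun s => Real.exp (-(p.2 * (p.1 - s))) * w s) s) := by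
    have h : StronglyMeasurable (fun q : (ℝ × ℝ) × ℝ =>
        ({q : (ℝ × ℝ) × ℝ | 0 < q.2 ∧ q.2 ≤ q.1.1}).indicator
          (fun q => Real.exp (-(q.1.2 * (q.1.1 - q.2))) * w q.2) q) := by
      apply Measurable.stronglyMeasurable
      apply Measurable.indicator (by fun_prop)
      exact MeasurableSet.inter
        (measurableSet_lt measurable_const (measurable_snd))
        (measurableSet_le measurable_snd (measurable_fst.comp measurable_fst))
    have := h.integral_prod_right' (ν := (volume : Measure ℝ))
    convert this using 2
    rfl
  -- final assembly
  set C : ℝ := ∫ s, |w s| with hC_def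
  have hVW0 : Vf = Wf 0 := by
    rw [hVf_def, hWf_def]
    ext t
    simp
  have hνT : IsFiniteMeasure (volume.restrict (Set.Ioc (0:ℝ) T)) := by
    constructor
    rw [Measure.restrict_apply_univ]
    exact measure_Ioc_lt_top
  have haeT : ∀ᵐ p : ℝ × ℝ ∂((volume.restrict (Set.Ioc (0:ℝ) T)).prod μ),
      p.1 ∈ Set.Ioc (0:ℝ) T := by
    rw [ae_iff]
    have h1 : {p : ℝ × ℝ | ¬ p.1 ∈ Set.Ioc (0:ℝ) T} = (Set.Ioc (0:ℝ) T)ᶜ ×ˢ Set.univ := by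
      ext p; simp
    rw [h1, Measure.prod_prod,
      Measure.restrict_apply measurableSet_Ioc.compl, Set.compl_inter_self,
      measure_empty, zero_mul]
  have haeL : ∀ᵐ p : ℝ × ℝ ∂((volume.restrict (Set.Ioc (0:ℝ) T)).prod μ), 0 ≤ p.2 := by
    rw [ae_iff]
    have h1 : {p : ℝ × ℝ | ¬ 0 ≤ p.2} = Set.univ ×ˢ Set.Iio 0 := by
      ext p; simp [not_le]
    rw [h1, Measure.prod_prod, hμ, mul_zero]
  have hint2 : Integrable (fun p : ℝ × ℝ => Vf p.1 * Wf p.2 p.1)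
      ((volume.restrict (Set.Ioc (0:ℝ) T)).prod μ) := by
    apply Integrable.mono' (g := fun _ : ℝ × ℝ => C * C) (integrable_const _)
    · apply AEStronglyMeasurable.congr (f := fun p : ℝ × ℝ => Vf p.1 *
        ∫ s, (Set.Ioc (0:ℝ) p.1).indicator (fun s => Real.exp (-(p.2 * (p.1 - s))) * w s) s)
      · exact ((hVcont.measurable.comp measurable_fst).mul hJM.measurable).aestronglyMeasurable
      · filter_upwards [haeT] with p hp
        congr 1
        rw [MeasureTheory.integral_indicator measurableSet_Ioc, hWf_def]
        simp only
        rw [intervalIntegral.integral_of_le hp.1.le]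
    · filter_upwards [haeT, haeL] with p hp1 hp2
      rw [Real.norm_eq_abs, abs_mul]
      have h1 : |Vf p.1| ≤ C := by
        rw [hVW0]
        exact hW_bound 0 le_rfl p.1 hp1.1.le
      have h2 : |Wf p.2 p.1| ≤ C := hW_bound p.2 hp2 p.1 hp1.1.le
      exact mul_le_mul h1 h2 (abs_nonneg _) (le_trans (abs_nonneg _) h1)
  have swap2 := MeasureTheory.integral_integral_swap
    (f := fun t l => Vf t * Wf l t) (μ := volume.restrict (Set.Ioc (0:ℝ) T)) (ν := μ)
    (by exact hint2)
  rw [intervalIntegral.integral_of_le hT.le]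
  have e : ∀ t ∈ Set.Ioc (0:ℝ) T,
      (kappa * ∫ s in (0:ℝ)..t, v s) * (∫ s in (0:ℝ)..t, G (t - s) * v s)
        = kappa * ∫ l, Vf t * Wf l t ∂μ := by
    intro t ht
    rw [hInner t ht]
    have hv_eq : (∫ s in (0:ℝ)..t, v s) = Vf t := by
      rw [hVf_def]
      simp only
      apply intervalIntegral.integral_congr
      intro s hs
      rw [Set.uIcc_of_le ht.1.le] at hs
      have hsmem : s ∈ Set.Icc (0:ℝ) T := ⟨hs.1, le_trans hs.2 ht.2⟩
      show v s = w s
      rw [hw_def, Set.indicator_of_mem hsmem]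
    rw [hv_eq, MeasureTheory.integral_const_mul]
    ring
  rw [setIntegral_congr_fun measurableSet_Ioc e, MeasureTheory.integral_const_mul]
  apply mul_nonneg hkappa
  rw [swap2]
  apply integral_nonneg_of_ae
  filter_upwards [hμae] with l hl
  have := hPos l hl
  rw [intervalIntegral.integral_of_le hT.le] at this
  exact this
end

section
/- Let H be a Hilbert space, 𝐁 : H → H weakly sequentially continuous, and suppose 𝐈 + 𝐁 is a bijection with Lipschitz inverse (so (𝐈+𝐁)^{-1} maps bounded sets to bounded sets and (𝐈+𝐁)^{-1}(0) = 0 when 𝐁(0)=0). Then (𝐈 + 𝐁)^{-1} is weakly sequentially continuous: if yₙ ⇀ y, then (𝐈+𝐁)^{-1}yₙ ⇀ (𝐈+𝐁)^{-1}y. -/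
open Filter Topology
open scoped RealInnerProductSpace

/-- Weak convergence of a sequence in a real inner product space. -/
def WeakConv {H : Type*} [NormedAddCommGroup H] [InnerProductSpace ℝ H]
    (x : ℕ → H) (l : H) : Prop :=
  ∀ w : H, Tendsto (fun n => ⟪x n, w⟫) atTop (nhds ⟪l, w⟫)

lemma weak_bw {H : Type*} [NormedAddCommGroup H] [InnerProductSpace ℝ H]
    [CompleteSpace H] (x : ℕ → H) (C : ℝ) (hC : ∀ n, ‖x n‖ ≤ C) :
    ∃ φ : ℕ → ℕ, StrictMono φ ∧ ∃ l : H,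
      ∀ w : H, Tendsto (fun k => ⟪x (φ k), w⟫) atTop (nhds ⟪l, w⟫) := by
  have hC0 : 0 ≤ C := le_trans (norm_nonneg _) (hC 0)
  -- Gram entries live in a compact metrizable product
  set s : Set (ℕ → ℝ) := Set.univ.pi (fun _ => Set.Icc (-(C*C)) (C*C)) with hs
  have hcs : IsCompact s := isCompact_univ_pi (fun _ => isCompact_Icc)
  have hmem : ∀ n, (fun m => ⟪x n, x m⟫) ∈ s := by
    intro n m _
    have h1 : |⟪x n, x m⟫| ≤ ‖x n‖ * ‖x m‖ := abs_real_inner_le_norm _ _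
    have h2 : ‖x n‖ * ‖x m‖ ≤ C * C :=
      mul_le_mul (hC n) (hC m) (norm_nonneg _) hC0
    constructor <;> [linarith [abs_le.1 (h1.trans h2) |>.1]; linarith [abs_le.1 (h1.trans h2) |>.2]]
  obtain ⟨g, -, φ, hφ, hg⟩ := hcs.isSeqCompact hmem
  rw [tendsto_pi_nhds] at hg
  -- the set of w where the inner products converge is a closed submodule
  set T : Submodule ℝ H :=
    { carrier := {w | ∃ r : ℝ, Tendsto (fun k => ⟪x (φ k), w⟫) atTop (nhds r)}
      add_mem' := by
        intro a b ha hb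
        obtain ⟨ra, ha⟩ := ha
        obtain ⟨rb, hb⟩ := hb
        exact ⟨ra + rb, by simpa [inner_add_right] using ha.add hb⟩
      zero_mem' := ⟨0, by simp⟩
      smul_mem' := by
        intro c w hw
        obtain ⟨r, hr⟩ := hw
        exact ⟨c * r, by simpa [real_inner_smul_right] using hr.const_mul c⟩ } with hT
  have hTclosed : IsClosed (T : Set H) := by
    rw [← isSeqClosed_iff_isClosed]
    intro u w hu huw
    show ∃ r : ℝ, Tendsto (fun k => ⟪x (φ k), w⟫) atTop (nhds r)
    apply cauchySeq_tendsto_of_complete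
    rw [Metric.cauchySeq_iff]
    intro ε hε
    set C' : ℝ := max C 1 with hC'
    have hC'pos : 0 < C' := lt_of_lt_of_le one_pos (le_max_right _ _)
    obtain ⟨j, hj⟩ := Metric.tendsto_atTop.1 huw (ε/3/C') (by positivity)
    have hdistj : ∀ k, dist ⟪x (φ k), u j⟫ ⟪x (φ k), w⟫ ≤ ε/3 := by
      intro k
      have : dist ⟪x (φ k), u j⟫ ⟪x (φ k), w⟫ = |⟪x (φ k), u j - w⟫| := by
        rw [Real.dist_eq, inner_sub_right]
      rw [this]
      calc |⟪x (φ k), u j - w⟫| ≤ ‖x (φ k)‖ * ‖u j - w‖ := abs_real_inner_le_norm _ _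
        _ ≤ C' * (ε/3/C') := by
            apply mul_le_mul ((hC _).trans (le_max_left _ _)) _ (norm_nonneg _) hC'pos.le
            rw [← dist_eq_norm]
            exact (hj j le_rfl).le
        _ = ε/3 := by rw [mul_comm, div_mul_cancel₀ _ hC'pos.ne']
    obtain ⟨rj, hrj⟩ := hu j
    obtain ⟨N, hN⟩ := Metric.cauchySeq_iff.1 hrj.cauchySeq (ε/3) (by positivity)
    refine ⟨N, fun m hm n hn => ?_⟩
    calc dist ⟪x (φ m), w⟫ ⟪x (φ n), w⟫
        ≤ dist ⟪x (φ m), w⟫ ⟪x (φ m), u j⟫ + dist ⟪x (φ m), u j⟫ ⟪x (φ n), u j⟫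
          + dist ⟪x (φ n), u j⟫ ⟪x (φ n), w⟫ := dist_triangle4 _ _ _ _
      _ < ε/3 + ε/3 + ε/3 := by
          have h1 := hdistj m
          have h2 := hdistj n
          rw [dist_comm] at h1
          have h3 := hN m hm n hn
          linarith
      _ = ε := by ring
  -- T contains each x m, hence the closed span K, hence Kᗮ, hence everything
  have hxT : ∀ m, x m ∈ T := fun m => ⟨g m, hg m⟩
  set K : Submodule ℝ H := (Submodule.span ℝ (Set.range x)).topologicalClosure with hK
  have hKT : K ≤ T := by
    apply Submodule.topologicalClosure_minimal _ _ hTclosed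
    rw [Submodule.span_le]
    rintro - ⟨m, rfl⟩
    exact hxT m
  have : CompleteSpace K :=
    (Submodule.isClosed_topologicalClosure _).completeSpace_coe
  have hKperpT : Kᗮ ≤ T := by
    intro w hw
    have : ∀ k, ⟪x (φ k), w⟫ = 0 := by
      intro k
      have hxK : x (φ k) ∈ K :=
        (Submodule.le_topologicalClosure _) (Submodule.subset_span ⟨φ k, rfl⟩)
      exact Submodule.inner_right_of_mem_orthogonal hxK hw
    have heq : (fun k => ⟪x (φ k), w⟫) = fun _ => (0:ℝ) := funext this
    exact ⟨0, by rw [heq]; exact tendsto_const_nhds⟩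
  have hTtop : ∀ w : H, ∃ r : ℝ, Tendsto (fun k => ⟪x (φ k), w⟫) atTop (nhds r) := by
    intro w
    have : w ∈ K ⊔ Kᗮ := by rw [Submodule.sup_orthogonal_of_hasOrthogonalProjection]; trivial
    exact (sup_le hKT hKperpT) this
  -- build the limit functional
  choose f hf using hTtop
  have htend : Tendsto (fun k w => (innerSL ℝ (x (φ k))) w) atTop (nhds f) := by
    rw [tendsto_pi_nhds]
    exact fun w => hf w
  let F : H →L[ℝ] ℝ := continuousLinearMapOfTendsto (fun k => innerSL ℝ (x (φ k))) htend
  refine ⟨φ, hφ, (InnerProductSpace.toDual ℝ H).symm F, fun w => ?_⟩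
  have : ⟪(InnerProductSpace.toDual ℝ H).symm F, w⟫ = F w := InnerProductSpace.toDual_symm_apply
  rw [this]
  show Tendsto (fun k => ⟪x (φ k), w⟫) atTop (nhds (F w))
  have : F w = f w := rfl
  rw [this]
  exact hf w

theorem stmt10 {H : Type*} [NormedAddCommGroup H] [InnerProductSpace ℝ H]
    [CompleteSpace H]
    (B S : H → H) (KS : NNReal)
    -- B is weakly sequentially continuous
    (hB : ∀ (x : ℕ → H) (l : H), WeakConv x l → WeakConv (fun n => B (x n)) (B l))
    -- 𝐈 + 𝐁 is a bijection with Lipschitz inverse S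
    (hS : LipschitzWith KS S)
    (hleft : ∀ u : H, S (u + B u) = u) (hright : ∀ u : H, S u + B (S u) = u)
    (hB0 : B 0 = 0) :
    -- (𝐈 + 𝐁)⁻¹ = S is weakly sequentially continuous
    ∀ (y : ℕ → H) (l : H), WeakConv y l → WeakConv (fun n => S (y n)) (S l) := by
  intro y l hy
  -- S 0 = 0
  have hS0 : S 0 = 0 := by
    have := hleft 0
    rwa [hB0, add_zero] at this
  -- y is norm-bounded (Banach–Steinhaus)
  obtain ⟨Cy, hCy⟩ : ∃ Cy : ℝ, ∀ n, ‖y n‖ ≤ Cy := by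
    have hb : ∀ w : H, ∃ C : ℝ, ∀ n : ℕ, ‖(innerSL ℝ (y n)) w‖ ≤ C := by
      intro w
      obtain ⟨C, hC⟩ := ((hy w).norm).bddAbove_range
      exact ⟨C, fun n => hC ⟨n, rfl⟩⟩
    obtain ⟨C', hC'⟩ := banach_steinhaus hb
    exact ⟨C', fun n => by rw [← innerSL_apply_norm ℝ (y n)]; exact hC' n⟩
  -- hence S ∘ y is norm-bounded
  have hCx : ∀ n, ‖S (y n)‖ ≤ (KS : ℝ) * Cy := by
    intro n
    have := hS.dist_le_mul (y n) 0
    rw [hS0, dist_zero_right, dist_zero_right] at this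
    exact this.trans (mul_le_mul_of_nonneg_left (hCy n) KS.coe_nonneg)
  -- weak convergence via subsequences
  intro w
  apply tendsto_of_subseq_tendsto
  intro ns hns
  obtain ⟨φ, hφ, l', hl'⟩ :=
    weak_bw (fun n => S (y (ns n))) ((KS : ℝ) * Cy) (fun n => hCx (ns n))
  refine ⟨φ, ?_⟩
  -- identify the weak limit: l' + B l' = l, so l' = S l
  have hyconv : WeakConv (fun k => y (ns (φ k))) l := by
    intro w'
    exact (hy w').comp (hns.comp hφ.tendsto_atTop)
  have hBconv := hB (fun k => S (y (ns (φ k)))) l' hl'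
  have hll : l' + B l' = l := by
    apply ext_inner_left ℝ
    intro v
    rw [real_inner_comm _ v, real_inner_comm _ v]
    have h1 : Tendsto (fun k => ⟪S (y (ns (φ k))) + B (S (y (ns (φ k)))), v⟫)
        atTop (nhds ⟪l' + B l', v⟫) := by
      simp only [inner_add_left]
      exact (hl' v).add (hBconv v)
    have h2 : Tendsto (fun k => ⟪S (y (ns (φ k))) + B (S (y (ns (φ k)))), v⟫)
        atTop (nhds ⟪l, v⟫) := by
      simp only [hright]
      exact hyconv v
    exact tendsto_nhds_unique h1 h2
  have : l' = S l := by rw [← hll, hleft]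
  rw [← this]
  exact hl' w
end
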